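/- Let s ≥ 2 and let G = sK₃ ∨ K₁ be the join of s disjoint triangles with a single vertex, a graph of order n = 3s+1. Then ft(G) = s+1 = (n−1)/3 + 1, Z*(G) = 3s/2 = (n−1)/2, and Z(G) = 2s+1 = 2(n−1)/3 + 1. -/

import Mathlib

open Finset

/-- A fort of a graph: a nonempty (finite) set of vertices `F` such that no vertex
outside `F` has exactly one neighbor in `F`. -/
def IsFort {V : Type*} (G : SimpleGraph V) (F : Finset V) : Prop :=
  F.Nonempty ∧ ∀ v ∉ F, ¬ ∃! u, u ∈ F ∧ G.Adj v u

/-- The fort number: the maximum cardinality of a collection of pairwise disjoint forts. -/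
noncomputable def fortNumber {V : Type*} (G : SimpleGraph V) : ℕ :=
  sSup {k | ∃ 𝒞 : Finset (Finset V), (∀ F ∈ 𝒞, IsFort G F) ∧
    (↑𝒞 : Set (Finset V)).Pairwise Disjoint ∧ 𝒞.card = k}

/-- The fractional zero forcing number. -/
noncomputable def fracZ {V : Type*} [Fintype V] (G : SimpleGraph V) : ℝ :=
  sInf {x : ℝ | ∃ ω : V → ℝ, (∀ v, 0 ≤ ω v) ∧
    (∀ F : Finset V, IsFort G F → 1 ≤ ∑ v ∈ F, ω v) ∧ x = ∑ v, ω v}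

/-- The set of vertices eventually filled by the zero forcing process started at `S`. -/
inductive ZFForced {V : Type*} (G : SimpleGraph V) (S : Set V) : V → Prop
  | init (v : V) : v ∈ S → ZFForced G S v
  | force (u w : V) : G.Adj u w → ZFForced G S u →
      (∀ x, G.Adj u x → x ≠ w → ZFForced G S x) → ZFForced G S w

/-- A zero forcing set: starting from `S`, every vertex is eventually filled. -/
def IsZeroForcingSet {V : Type*} (G : SimpleGraph V) (S : Set V) : Prop :=
  ∀ v, ZFForced G S v

/-- The zero forcing number: minimum cardinality of a zero forcing set. -/
noncomputable def zfNumber {V : Type*} (G : SimpleGraph V) : ℕ :=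
  sInf {k | ∃ S : Finset V, IsZeroForcingSet G ↑S ∧ S.card = k}


/-- The graph `sK₃ ∨ K₁`: `s` disjoint triangles joined to one extra vertex. -/
def sK3veeK1 (s : ℕ) : SimpleGraph (Fin s × Fin 3 ⊕ Unit) :=
  SimpleGraph.fromRel (fun a b => match a, b with
    | Sum.inl (i, _), Sum.inl (j, _) => i = j
    | _, _ => True)

section Aux

variable {s : ℕ}

/-- vertex type abbreviation -/
abbrev Vt (s : ℕ) := Fin s × Fin 3 ⊕ Unit

/-- the apex vertex -/
abbrev apx (s : ℕ) : Vt s := Sum.inr ()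

lemma adj_ll {i j : Fin s} {x y : Fin 3} :
    (sK3veeK1 s).Adj (Sum.inl (i, x)) (Sum.inl (j, y)) ↔ i = j ∧ x ≠ y := by
  simp only [sK3veeK1, SimpleGraph.fromRel_adj]
  constructor
  · rintro ⟨hne, h | h⟩
    · exact ⟨h, fun hxy => hne (by rw [h, hxy])⟩
    · exact ⟨h.symm, fun hxy => hne (by rw [h, hxy])⟩
  · rintro ⟨hij, hxy⟩
    refine ⟨?_, Or.inl hij⟩
    intro hc
    apply hxy
    have := Sum.inl.inj hc
    exact congrArg Prod.snd this

lemma adj_lr {p : Fin s × Fin 3} {u : Unit} :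
    (sK3veeK1 s).Adj (Sum.inl p) (Sum.inr u) := by
  simp only [sK3veeK1, SimpleGraph.fromRel_adj]
  exact ⟨Sum.inl_ne_inr, Or.inl trivial⟩

lemma adj_rl {p : Fin s × Fin 3} {u : Unit} :
    (sK3veeK1 s).Adj (Sum.inr u) (Sum.inl p) := adj_lr.symm

lemma not_adj_rr {u v : Unit} : ¬ (sK3veeK1 s).Adj (Sum.inr u) (Sum.inr v) := by
  simp only [sK3veeK1, SimpleGraph.fromRel_adj]
  rintro ⟨hne, -⟩
  exact hne rfl

end Aux
section Aux2

variable {s : ℕ}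

lemma exists_ne_of_not_existsUnique {α : Type*} {P : α → Prop} (h : ¬ ∃! u, P u)
    {u₀ : α} (h₀ : P u₀) : ∃ u, P u ∧ u ≠ u₀ := by
  by_contra hc
  push_neg at hc
  exact h ⟨u₀, h₀, fun y hy => hc y hy⟩

/-- any 2-element subset of a triangle is a fort -/
lemma pairFort {i : Fin s} {x y : Fin 3} (hxy : x ≠ y) :
    IsFort (sK3veeK1 s) {Sum.inl (i, x), Sum.inl (i, y)} := by
  constructor
  · exact ⟨_, Finset.mem_insert_self _ _⟩
  · intro v hv
    rintro ⟨u, ⟨huF, hadj⟩, huniq⟩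
    -- show the two elements are both valid witnesses, contradiction
    have hx : v ≠ Sum.inl (i, x) := by
      intro h; subst h; simp at hv
    have hy : v ≠ Sum.inl (i, y) := by
      intro h; subst h; simp at hv
    -- u is one of the two
    simp only [Finset.mem_insert, Finset.mem_singleton] at huF
    -- v must be adjacent to u; case on v
    match v, hv with
    | Sum.inr _, _ =>
      have h1 := huniq (Sum.inl (i, x)) ⟨by simp, adj_rl⟩
      have h2 := huniq (Sum.inl (i, y)) ⟨by simp, adj_rl⟩
      exact hxy (Prod.ext_iff.mp (Sum.inl.inj (h1.trans h2.symm))).2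
    | Sum.inl (j, z), _ =>
      rcases huF with h | h <;> subst h
      · have hji : j = i ∧ z ≠ x := adj_ll.mp hadj
        obtain ⟨hji, hzx⟩ := hji
        subst hji
        have hzy : z ≠ y := by
          intro h; subst h; exact hy rfl
        have h1 := huniq (Sum.inl (j, y)) ⟨by simp, adj_ll.mpr ⟨rfl, hzy⟩⟩
        exact hxy ((Prod.ext_iff.mp (Sum.inl.inj h1)).2).symm
      · have hji : j = i ∧ z ≠ y := adj_ll.mp hadj
        obtain ⟨hji, hzy⟩ := hji
        subst hji
        have hzx : z ≠ x := by
          intro h; subst h; exact hx rfl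
        have h1 := huniq (Sum.inl (j, x)) ⟨by simp, adj_ll.mpr ⟨rfl, hzx⟩⟩
        exact hxy ((Prod.ext_iff.mp (Sum.inl.inj h1)).2)

/-- the apex together with one vertex from each triangle is a fort -/
lemma transFort (c : Fin s → Fin 3) :
    IsFort (sK3veeK1 s) (insert (Sum.inr ())
      (Finset.image (fun i => (Sum.inl (i, c i) : Vt s)) Finset.univ)) := by
  constructor
  · exact ⟨_, Finset.mem_insert_self _ _⟩
  · intro v hv
    rintro ⟨u, ⟨huF, hadj⟩, huniq⟩
    match v, hv with
    | Sum.inr _, hv => simp at hv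
    | Sum.inl (j, z), hv =>
      have hzc : z ≠ c j := by
        intro h; subst h
        simp only [Finset.mem_insert, Finset.mem_image, Finset.mem_univ, true_and] at hv
        exact hv (Or.inr ⟨j, rfl⟩)
      have h1 := huniq (Sum.inr ()) ⟨Finset.mem_insert_self _ _, adj_lr⟩
      have h2 := huniq (Sum.inl (j, c j))
        ⟨Finset.mem_insert_of_mem (Finset.mem_image.mpr ⟨j, Finset.mem_univ _, rfl⟩),
          adj_ll.mpr ⟨rfl, hzc⟩⟩
      exact nomatch (h1.trans h2.symm)

/-- a fort avoiding the apex contains two vertices of a common triangle -/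
lemma fort_no_apex {F : Finset (Vt s)} (hF : IsFort (sK3veeK1 s) F)
    (ha : Sum.inr () ∉ F) :
    ∃ i x y, x ≠ y ∧ Sum.inl (i, x) ∈ F ∧ Sum.inl (i, y) ∈ F := by
  obtain ⟨w, hw⟩ := hF.1
  match w, hw with
  | Sum.inr u, hw => exact absurd hw ha
  | Sum.inl (i, x), hw =>
    by_cases hall : ∀ y : Fin 3, Sum.inl (i, y) ∈ F
    · exact ⟨i, 0, 1, by decide, hall 0, hall 1⟩
    · push_neg at hall
      obtain ⟨y, hy⟩ := hall
      have hyx : y ≠ x := by intro h; subst h; exact hy hw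
      have hne := hF.2 (Sum.inl (i, y)) hy
      obtain ⟨u', ⟨hu'F, hu'adj⟩, hu'ne⟩ :=
        exists_ne_of_not_existsUnique hne (u₀ := Sum.inl (i, x))
          ⟨hw, adj_ll.mpr ⟨rfl, hyx⟩⟩
      match u' with
      | Sum.inr _ => exact absurd hu'F ha
      | Sum.inl (j, z) =>
        obtain ⟨hji, hzy⟩ := adj_ll.mp hu'adj
        subst hji
        have hzx : z ≠ x := by
          intro h; subst h; exact hu'ne rfl
        exact ⟨i, z, x, hzx, hu'F, hw⟩

/-- a fort containing the apex meets every triangle -/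
lemma fort_apex {F : Finset (Vt s)} (hF : IsFort (sK3veeK1 s) F)
    (ha : Sum.inr () ∈ F) : ∀ i : Fin s, ∃ x, Sum.inl (i, x) ∈ F := by
  intro i
  by_contra hc
  push_neg at hc
  apply hF.2 (Sum.inl (i, 0)) (hc 0)
  refine ⟨Sum.inr (), ⟨ha, adj_lr⟩, ?_⟩
  rintro y ⟨hyF, hyadj⟩
  match y with
  | Sum.inr u => rfl
  | Sum.inl (j, z) =>
    obtain ⟨hji, -⟩ := adj_ll.mp hyadj
    subst hji
    exact absurd hyF (hc z)

end Aux2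
section Aux3

variable {s : ℕ}

lemma fort_card_le {𝒞 : Finset (Finset (Vt s))}
    (hforts : ∀ F ∈ 𝒞, IsFort (sK3veeK1 s) F)
    (hdis : (↑𝒞 : Set (Finset (Vt s))).Pairwise Disjoint) : 𝒞.card ≤ s + 1 := by
  classical
  have key : 𝒞.card ≤ (Finset.univ : Finset (Fin s ⊕ Unit)).card := by
    apply Finset.card_le_card_of_injOn
      (fun F => if h : ∃ i x y, x ≠ y ∧ Sum.inl (i,x) ∈ F ∧ Sum.inl (i,y) ∈ F
        then Sum.inl h.choose else Sum.inr ())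
    · intro _ _; exact Finset.mem_univ _
    · intro F hF F' hF' heq
      dsimp only at heq
      by_contra hne
      have hdisj := hdis (Finset.mem_coe.mpr hF) (Finset.mem_coe.mpr hF') hne
      by_cases h1 : ∃ i x y, x ≠ y ∧ Sum.inl (i,x) ∈ F ∧ Sum.inl (i,y) ∈ F
      · by_cases h2 : ∃ i x y, x ≠ y ∧ Sum.inl (i,x) ∈ F' ∧ Sum.inl (i,y) ∈ F'
        · rw [dif_pos h1, dif_pos h2] at heq
          have hii : h1.choose = h2.choose := Sum.inl.inj heq
          obtain ⟨x1, y1, hxy1, hm1, hm2⟩ := h1.choose_spec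
          obtain ⟨x2, y2, hxy2, hm3, hm4⟩ := h2.choose_spec
          rw [← hii] at hm3 hm4
          set i := h1.choose
          have hd : ∀ z w : Fin 3, Sum.inl (i, z) ∈ F → Sum.inl (i, w) ∈ F' → z ≠ w := by
            intro z w hz hw hzw
            subst hzw
            exact Finset.disjoint_left.mp hdisj hz hw
          have d1 := hd _ _ hm1 hm3
          have d2 := hd _ _ hm1 hm4
          have d3 := hd _ _ hm2 hm3
          have d4 := hd _ _ hm2 hm4
          have e1 : x1.val ≠ y1.val := fun h => hxy1 (Fin.val_injective h)
          have e2 : x2.val ≠ y2.val := fun h => hxy2 (Fin.val_injective h)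
          have f1 : x1.val ≠ x2.val := fun h => d1 (Fin.val_injective h)
          have f2 : x1.val ≠ y2.val := fun h => d2 (Fin.val_injective h)
          have f3 : y1.val ≠ x2.val := fun h => d3 (Fin.val_injective h)
          have f4 : y1.val ≠ y2.val := fun h => d4 (Fin.val_injective h)
          have b1 := x1.isLt; have b2 := y1.isLt; have b3 := x2.isLt; have b4 := y2.isLt
          omega
        · rw [dif_pos h1, dif_neg h2] at heq
          exact nomatch heq
      · have haF : Sum.inr () ∈ F := by
          by_contra ha
          exact h1 (fort_no_apex (hforts F hF) ha)
        by_cases h2 : ∃ i x y, x ≠ y ∧ Sum.inl (i,x) ∈ F' ∧ Sum.inl (i,y) ∈ F'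
        · rw [dif_neg h1, dif_pos h2] at heq
          exact nomatch heq
        · have haF' : Sum.inr () ∈ F' := by
            by_contra ha
            exact h2 (fort_no_apex (hforts F' hF') ha)
          exact Finset.disjoint_left.mp hdisj haF haF'
  simpa using key

def pairF (s : ℕ) (i : Fin s) : Finset (Vt s) := {Sum.inl (i, 0), Sum.inl (i, 1)}

def transF (s : ℕ) : Finset (Vt s) :=
  insert (Sum.inr ()) (Finset.image (fun i => (Sum.inl (i, 2) : Vt s)) Finset.univ)

lemma pairF_inj : Function.Injective (pairF s) := by
  intro i j h
  have : (Sum.inl (i, 0) : Vt s) ∈ pairF s j := h ▸ Finset.mem_insert_self _ _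
  simp only [pairF, Finset.mem_insert, Finset.mem_singleton, Sum.inl.injEq,
    Prod.mk.injEq] at this
  rcases this with ⟨h, -⟩ | ⟨h, hc⟩
  · exact h
  · exact absurd hc (by decide)

lemma fort_collection : ∃ 𝒞 : Finset (Finset (Vt s)),
    (∀ F ∈ 𝒞, IsFort (sK3veeK1 s) F) ∧
    (↑𝒞 : Set (Finset (Vt s))).Pairwise Disjoint ∧ 𝒞.card = s + 1 := by
  classical
  refine ⟨insert (transF s) (Finset.image (pairF s) Finset.univ), ?_, ?_, ?_⟩
  · intro F hF
    rcases Finset.mem_insert.mp hF with h | h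
    · subst h; exact transFort (fun _ => 2)
    · obtain ⟨i, -, rfl⟩ := Finset.mem_image.mp h
      exact pairFort (by decide : (0 : Fin 3) ≠ 1)
  · intro F hF F' hF' hne
    simp only [Finset.coe_insert, Set.mem_insert_iff, Finset.coe_image,
      Set.mem_image, Finset.mem_coe, Finset.coe_univ, Set.image_univ,
      Set.mem_range] at hF hF'
    have hdisjTP : ∀ i : Fin s, Disjoint (transF s) (pairF s i) := by
      intro i
      rw [Finset.disjoint_left]
      intro a ha hb
      simp only [transF, Finset.mem_insert, Finset.mem_image, Finset.mem_univ,
        true_and] at ha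
      simp only [pairF, Finset.mem_insert, Finset.mem_singleton] at hb
      rcases ha with rfl | ⟨j, rfl⟩
      · rcases hb with h | h <;> exact nomatch h
      · rcases hb with h | h <;>
        · obtain ⟨-, h2⟩ := Prod.mk.injEq .. ▸ Sum.inl.inj h
          exact absurd h2 (by decide)
    have hdisjPP : ∀ i j : Fin s, i ≠ j → Disjoint (pairF s i) (pairF s j) := by
      intro i j hij
      rw [Finset.disjoint_left]
      intro a ha hb
      simp only [pairF, Finset.mem_insert, Finset.mem_singleton] at ha hb
      rcases ha with rfl | rfl <;> rcases hb with h | h <;>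
        exact hij (congrArg Prod.fst (Sum.inl.inj h))
    rcases hF with rfl | ⟨i, rfl⟩ <;> rcases hF' with rfl | ⟨j, rfl⟩
    · exact absurd rfl hne
    · exact hdisjTP j
    · exact (hdisjTP i).symm
    · exact hdisjPP i j (fun h => hne (by rw [h]))
  · rw [Finset.card_insert_of_notMem, Finset.card_image_of_injective _ pairF_inj]
    · simp
    · intro h
      obtain ⟨i, -, heq⟩ := Finset.mem_image.mp h
      have : (Sum.inr () : Vt s) ∈ pairF s i := heq ▸ Finset.mem_insert_self _ _
      simp [pairF] at this

lemma fortNumber_eq : fortNumber (sK3veeK1 s) = s + 1 := by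
  obtain ⟨𝒞, h1, h2, h3⟩ := fort_collection (s := s)
  have hmem : s + 1 ∈ {k | ∃ 𝒞 : Finset (Finset (Vt s)),
      (∀ F ∈ 𝒞, IsFort (sK3veeK1 s) F) ∧
      (↑𝒞 : Set (Finset (Vt s))).Pairwise Disjoint ∧ 𝒞.card = k} := ⟨𝒞, h1, h2, h3⟩
  have hub : ∀ k ∈ {k | ∃ 𝒞 : Finset (Finset (Vt s)),
      (∀ F ∈ 𝒞, IsFort (sK3veeK1 s) F) ∧
      (↑𝒞 : Set (Finset (Vt s))).Pairwise Disjoint ∧ 𝒞.card = k}, k ≤ s + 1 := by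
    rintro k ⟨𝒟, hf, hd, rfl⟩
    exact fort_card_le hf hd
  exact le_antisymm (csSup_le ⟨s + 1, hmem⟩ hub) (le_csSup ⟨s + 1, hub⟩ hmem)

end Aux3
section Aux4

variable {s : ℕ}

lemma fort_two_left {F : Finset (Vt s)} (hs : 2 ≤ s) (hF : IsFort (sK3veeK1 s) F) :
    ∃ p q : Fin s × Fin 3, p ≠ q ∧ Sum.inl p ∈ F ∧ Sum.inl q ∈ F := by
  by_cases ha : Sum.inr () ∈ F
  · obtain ⟨x, hx⟩ := fort_apex hF ha ⟨0, by omega⟩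
    obtain ⟨y, hy⟩ := fort_apex hF ha ⟨1, by omega⟩
    refine ⟨(⟨0, by omega⟩, x), (⟨1, by omega⟩, y), ?_, hx, hy⟩
    intro h
    have := congrArg (fun p => (Prod.fst p).val) h
    simp at this
  · obtain ⟨i, x, y, hxy, h1, h2⟩ := fort_no_apex hF ha
    exact ⟨(i, x), (i, y), fun h => hxy (congrArg Prod.snd h), h1, h2⟩

lemma fracZ_eq (hs : 2 ≤ s) : fracZ (sK3veeK1 s) = 3 * (s : ℝ) / 2 := by
  classical
  have hmem : 3 * (s:ℝ)/2 ∈ {x : ℝ | ∃ ω : Vt s → ℝ, (∀ v, 0 ≤ ω v) ∧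
      (∀ F : Finset (Vt s), IsFort (sK3veeK1 s) F → 1 ≤ ∑ v ∈ F, ω v) ∧
      x = ∑ v, ω v} := by
    refine ⟨fun v => Sum.elim (fun _ => 1/2) (fun _ => 0) v, ?_, ?_, ?_⟩
    · rintro (p | u) <;> norm_num
    · intro F hF
      obtain ⟨p, q, hpq, hp, hq⟩ := fort_two_left hs hF
      have hsub : ({Sum.inl p, Sum.inl q} : Finset (Vt s)) ⊆ F := by
        intro a ha
        simp only [Finset.mem_insert, Finset.mem_singleton] at ha
        rcases ha with rfl | rfl <;> assumption
      have h1 := Finset.sum_le_sum_of_subset_of_nonneg hsub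
        (f := fun v => Sum.elim (fun _ => (1:ℝ)/2) (fun _ => 0) v)
        (fun v _ _ => by rcases v with p' | u' <;> norm_num)
      rw [Finset.sum_pair (by simpa using hpq)] at h1
      norm_num at h1
      exact h1
    · rw [Fintype.sum_sum_type]
      simp only [Sum.elim_inl, Sum.elim_inr, Finset.sum_const, Finset.card_univ,
        Fintype.card_prod, Fintype.card_fin, smul_zero, add_zero, nsmul_eq_mul]
      push_cast
      ring
  have hlb : ∀ x ∈ {x : ℝ | ∃ ω : Vt s → ℝ, (∀ v, 0 ≤ ω v) ∧
      (∀ F : Finset (Vt s), IsFort (sK3veeK1 s) F → 1 ≤ ∑ v ∈ F, ω v) ∧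
      x = ∑ v, ω v}, 3 * (s:ℝ)/2 ≤ x := by
    rintro x ⟨ω, h0, hfort, rfl⟩
    have htri : ∀ i : Fin s, 3/2 ≤ ∑ x : Fin 3, ω (Sum.inl (i, x)) := by
      intro i
      have h01 := hfort _ (pairFort (i := i) (x := 0) (y := 1) (by decide))
      have h02 := hfort _ (pairFort (i := i) (x := 0) (y := 2) (by decide))
      have h12 := hfort _ (pairFort (i := i) (x := 1) (y := 2) (by decide))
      rw [Finset.sum_pair (by simp)] at h01 h02 h12
      rw [Fin.sum_univ_three]
      linarith
    rw [Fintype.sum_sum_type, Fintype.sum_prod_type]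
    have hsum : ∑ _i : Fin s, (3/2 : ℝ) ≤ ∑ i : Fin s, ∑ x : Fin 3, ω (Sum.inl (i, x)) :=
      Finset.sum_le_sum (fun i _ => htri i)
    have hapex : (0:ℝ) ≤ ∑ u : Unit, ω (Sum.inr u) :=
      Finset.sum_nonneg (fun u _ => h0 _)
    rw [Finset.sum_const, Finset.card_univ, Fintype.card_fin, nsmul_eq_mul] at hsum
    linarith
  exact le_antisymm (csInf_le ⟨_, hlb⟩ hmem) (le_csInf ⟨_, hmem⟩ hlb)

end Aux4
section Aux5

variable {s : ℕ}

lemma fort_block {V : Type*} {G : SimpleGraph V} {S : Set V} {F : Finset V}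
    (hF : IsFort G F) (hdis : ∀ v ∈ F, v ∉ S) : ¬ IsZeroForcingSet G S := by
  have main : ∀ v, ZFForced G S v → v ∉ F := by
    intro v hv
    induction hv with
    | init v hv => exact fun hvF => hdis v hvF hv
    | force u w hadj hu hall ihu ihall =>
      intro hwF
      apply hF.2 u ihu
      refine ⟨w, ⟨hwF, hadj⟩, ?_⟩
      rintro y ⟨hyF, hy⟩
      by_contra hne
      exact ihall y hy hne hyF
  intro hZ
  obtain ⟨v, hv⟩ := hF.1
  exact main v (hZ v) hv

def zfS (s : ℕ) : Finset (Vt s) :=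
  (Finset.univ.image (fun i => (Sum.inl (i, 0) : Vt s))) ∪
  (Finset.univ.image (fun i => (Sum.inl (i, 1) : Vt s))) ∪ {Sum.inr ()}

lemma zfS_card : (zfS s).card = 2 * s + 1 := by
  classical
  have hinj : ∀ z : Fin 3, Function.Injective (fun i : Fin s => (Sum.inl (i, z) : Vt s)) := by
    intro z a b h
    exact congrArg Prod.fst (Sum.inl.inj h)
  have hd1 : Disjoint (Finset.univ.image (fun i => (Sum.inl (i, 0) : Vt s)))
      (Finset.univ.image (fun i => (Sum.inl (i, 1) : Vt s))) := by
    rw [Finset.disjoint_left]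
    intro a ha hb
    simp only [Finset.mem_image, Finset.mem_univ, true_and] at ha hb
    obtain ⟨i, rfl⟩ := ha
    obtain ⟨j, hj⟩ := hb
    have h2 := congrArg Prod.snd (Sum.inl.inj hj)
    simp at h2
  have hd2 : Disjoint ((Finset.univ.image (fun i => (Sum.inl (i, 0) : Vt s))) ∪
      (Finset.univ.image (fun i => (Sum.inl (i, 1) : Vt s)))) ({Sum.inr ()} : Finset (Vt s)) := by
    rw [Finset.disjoint_right]
    intro a ha hb
    simp only [Finset.mem_singleton] at ha
    subst ha
    simp only [Finset.mem_union, Finset.mem_image, Finset.mem_univ, true_and] at hb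
    rcases hb with ⟨i, h⟩ | ⟨i, h⟩ <;> exact nomatch h
  rw [zfS, Finset.card_union_of_disjoint hd2, Finset.card_union_of_disjoint hd1,
    Finset.card_image_of_injective _ (hinj 0), Finset.card_image_of_injective _ (hinj 1)]
  simp
  ring

lemma zfS_forcing : IsZeroForcingSet (sK3veeK1 s) ↑(zfS s) := by
  have h0 : ∀ (i : Fin s) (z : Fin 3), z = 0 ∨ z = 1 → (Sum.inl (i, z) : Vt s) ∈ (↑(zfS s) : Set (Vt s)) := by
    intro i z hz
    simp only [zfS, Finset.coe_union, Set.mem_union, Finset.coe_image,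
      Set.mem_image, Finset.mem_coe, Finset.coe_singleton, Set.mem_singleton_iff]
    rcases hz with rfl | rfl
    · exact Or.inl (Or.inl ⟨i, by simp⟩)
    · exact Or.inl (Or.inr ⟨i, by simp⟩)
  have hr : (Sum.inr () : Vt s) ∈ (↑(zfS s) : Set (Vt s)) := by
    simp [zfS]
  intro v
  match v with
  | Sum.inr u =>
    cases u
    exact ZFForced.init _ hr
  | Sum.inl (i, x) =>
    have h2 : ZFForced (sK3veeK1 s) ↑(zfS s) (Sum.inl (i, 2)) := by
      refine ZFForced.force (Sum.inl (i, 0)) _ (adj_ll.mpr ⟨rfl, by decide⟩)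
        (ZFForced.init _ (h0 i 0 (Or.inl rfl))) ?_
      intro y hadj hne
      match y with
      | Sum.inr u =>
        cases u
        exact ZFForced.init _ hr
      | Sum.inl (j, z) =>
        obtain ⟨hji, hz0⟩ := adj_ll.mp hadj
        subst hji
        have hz2 : z ≠ 2 := fun h => hne (by rw [h])
        fin_cases z
        · exact absurd rfl hz0
        · exact ZFForced.init _ (h0 _ 1 (Or.inr rfl))
        · exact absurd rfl hz2
    fin_cases x
    · exact ZFForced.init _ (h0 i 0 (Or.inl rfl))
    · exact ZFForced.init _ (h0 i 1 (Or.inr rfl))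
    · exact h2

lemma zf_lower {S : Finset (Vt s)} (hZ : IsZeroForcingSet (sK3veeK1 s) ↑S) :
    2 * s + 1 ≤ S.card := by
  classical
  by_contra hc
  push_neg at hc
  set C := Finset.univ \ S with hCdef
  have hVcard : (Finset.univ : Finset (Vt s)).card = 3 * s + 1 := by
    simp [Finset.card_univ]
    ring
  have hCcard : s + 1 ≤ C.card := by
    rw [hCdef, Finset.card_sdiff_of_subset (Finset.subset_univ S), hVcard]
    omega
  suffices hfort : ∃ F : Finset (Vt s), IsFort (sK3veeK1 s) F ∧ ∀ v ∈ F, v ∉ S by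
    obtain ⟨F, h1, h2⟩ := hfort
    exact fort_block h1 (fun v hv => fun hvS => h2 v hv (Finset.mem_coe.mp hvS)) hZ
  have memC : ∀ v, v ∈ C → v ∉ S := by
    intro v hv
    exact (Finset.mem_sdiff.mp hv).2
  by_cases hinj : Set.InjOn (Sum.map Prod.fst id : Vt s → Fin s ⊕ Unit) ↑C
  · have hle : C.card ≤ (Finset.univ : Finset (Fin s ⊕ Unit)).card :=
      Finset.card_le_card_of_injOn _ (fun _ _ => Finset.mem_univ _) hinj
    rw [Finset.card_univ] at hle
    simp only [Fintype.card_sum, Fintype.card_fin, Fintype.card_unit] at hle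
    have hCeq : C.card = s + 1 := le_antisymm hle hCcard
    have himg : C.image (Sum.map Prod.fst id) = Finset.univ := by
      apply Finset.eq_univ_of_card
      rw [Finset.card_image_of_injOn hinj, hCeq]
      simp
    have hax : (Sum.inr () : Vt s) ∈ C := by
      have hm : (Sum.inr () : Fin s ⊕ Unit) ∈ C.image (Sum.map Prod.fst id) :=
        himg ▸ Finset.mem_univ _
      obtain ⟨v, hvC, hv⟩ := Finset.mem_image.mp hm
      match v with
      | Sum.inl p => exact absurd hv (by simp [Sum.map])
      | Sum.inr u => cases u; exact hvC
    have htr : ∀ i : Fin s, ∃ x, (Sum.inl (i, x) : Vt s) ∈ C := by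
      intro i
      have hm : (Sum.inl i : Fin s ⊕ Unit) ∈ C.image (Sum.map Prod.fst id) :=
        himg ▸ Finset.mem_univ _
      obtain ⟨v, hvC, hv⟩ := Finset.mem_image.mp hm
      match v with
      | Sum.inr u => exact absurd hv (by simp [Sum.map])
      | Sum.inl (j, x) =>
        have hji : j = i := by simpa [Sum.map] using hv
        subst hji
        exact ⟨x, hvC⟩
    choose c hc2 using htr
    refine ⟨_, transFort c, ?_⟩
    intro v hv
    simp only [Finset.mem_insert, Finset.mem_image, Finset.mem_univ, true_and] at hv
    rcases hv with rfl | ⟨i, rfl⟩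
    · exact memC _ hax
    · exact memC _ (hc2 i)
  · rw [Set.InjOn] at hinj
    push_neg at hinj
    obtain ⟨a, haC, b, hbC, hab, hne⟩ := hinj
    rw [Finset.mem_coe] at haC hbC
    match a, b, haC, hbC, hab, hne with
    | Sum.inl (i, x), Sum.inl (j, y), haC, hbC, hab, hne =>
      have hij : i = j := by simpa [Sum.map] using hab
      subst hij
      have hxy : x ≠ y := by
        intro h
        exact hne (by rw [h])
      refine ⟨{Sum.inl (i, x), Sum.inl (i, y)}, pairFort hxy, ?_⟩
      intro v hv
      simp only [Finset.mem_insert, Finset.mem_singleton] at hv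
      rcases hv with rfl | rfl
      · exact memC _ haC
      · exact memC _ hbC
    | Sum.inl p, Sum.inr u, _, _, hab, _ => exact absurd hab (by simp [Sum.map])
    | Sum.inr u, Sum.inl p, _, _, hab, _ => exact absurd hab (by simp [Sum.map])
    | Sum.inr u, Sum.inr u', _, _, _, hne => cases u; cases u'; exact absurd rfl hne

lemma zfNumber_eq : zfNumber (sK3veeK1 s) = 2 * s + 1 := by
  have hmem : 2 * s + 1 ∈ {k | ∃ S : Finset (Vt s),
      IsZeroForcingSet (sK3veeK1 s) ↑S ∧ S.card = k} := ⟨zfS s, zfS_forcing, zfS_card⟩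
  have hlb : ∀ k ∈ {k | ∃ S : Finset (Vt s),
      IsZeroForcingSet (sK3veeK1 s) ↑S ∧ S.card = k}, 2 * s + 1 ≤ k := by
    rintro k ⟨S, hZ, rfl⟩
    exact zf_lower hZ
  exact le_antisymm (Nat.sInf_le hmem) (le_csInf ⟨_, hmem⟩ hlb)

end Aux5

/-- for `s ≥ 2` and `G = sK₃ ∨ K₁` (of order `n = 3s+1`),
`ft(G) = s+1`, `Z*(G) = 3s/2`, and `Z(G) = 2s+1`. -/
theorem sK3veeK1_numbers (s : ℕ) (hs : 2 ≤ s) :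
    fortNumber (sK3veeK1 s) = s + 1 ∧
    fracZ (sK3veeK1 s) = 3 * (s : ℝ) / 2 ∧
    zfNumber (sK3veeK1 s) = 2 * s + 1 :=
  ⟨fortNumber_eq, fracZ_eq hs, zfNumber_eq⟩
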